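/- Let B be a D×D complex matrix in Jordan normal form whose first s diagonal entries (eigenvalues) are nonzero and remaining eigenvalues are zero, and let P be the orthogonal projector onto the span of the first s standard basis vectors. Let L be a linear subspace of End(ℂ^D) containing B with L^j = End(ℂ^D) for some j. Define M̃_j := P·L^j (the space of matrices PA with A ∈ L^j). Then dim M̃_{sD} = sD, i.e., P·L^{sD} equals the full space of linear maps from ℂ^D to the range of P. -/

import Mathlib

open Module

namespace Stmt13Aux

variable {D s : ℕ}

section Tdef
variable (D s : ℕ)
/-- The space of matrices supported on the first `s` rows. -/
noncomputable def T : Submodule ℂ (Matrix (Fin D) (Fin D) ℂ) where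
  carrier := {M | ∀ i j : Fin D, s ≤ (i : ℕ) → M i j = 0}
  add_mem' := fun ha hb i j h => by simp [Matrix.add_apply, ha i j h, hb i j h]
  zero_mem' := fun i j h => rfl
  smul_mem' := fun c M hM i j h => by simp [Matrix.smul_apply, hM i j h]

lemma mem_T {M : Matrix (Fin D) (Fin D) ℂ} :
    M ∈ T D s ↔ ∀ i j : Fin D, s ≤ (i : ℕ) → M i j = 0 := Iff.rfl

lemma finrank_T_le (hs : s ≤ D) : finrank ℂ (T D s) ≤ s * D := by
  let φ : T D s →ₗ[ℂ] (Fin s × Fin D → ℂ) :=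
    { toFun := fun M p => (M : Matrix (Fin D) (Fin D) ℂ) (Fin.castLE hs p.1) p.2
      map_add' := fun x y => by funext p; simp
      map_smul' := fun c x => by funext p; simp }
  have hinj : Function.Injective φ := by
    intro x y hxy
    ext i j
    by_cases hi : (i : ℕ) < s
    · have := congrFun hxy (⟨(i : ℕ), hi⟩, j)
      simpa [φ, Fin.castLE] using this
    · rw [x.2 i j (le_of_not_gt hi), y.2 i j (le_of_not_gt hi)]
  calc finrank ℂ (T D s) ≤ finrank ℂ (Fin s × Fin D → ℂ) :=
        LinearMap.finrank_le_finrank_of_injective hinj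
    _ = s * D := by
        rw [Module.finrank_fintype_fun_eq_card, Fintype.card_prod, Fintype.card_fin,
          Fintype.card_fin]

end Tdef


lemma Pmul_apply (P : Matrix (Fin D) (Fin D) ℂ)
    (hP : P = Matrix.of fun i j : Fin D => if i = j ∧ (i : ℕ) < s then 1 else 0)
    (A : Matrix (Fin D) (Fin D) ℂ) (i j : Fin D) :
    (P * A) i j = if (i : ℕ) < s then A i j else 0 := by
  subst hP
  rw [Matrix.mul_apply, Finset.sum_eq_single i]
  · by_cases hi : (i : ℕ) < s <;> simp [hi]
  · intro k _ hk
    simp [Ne.symm hk]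
  · intro h; exact absurd (Finset.mem_univ i) h

lemma block (B : Matrix (Fin D) (Fin D) ℂ)
    (hJordan : ∀ i j : Fin D, B i j ≠ 0 → j = i ∨ (j : ℕ) = (i : ℕ) + 1)
    (hBlock : ∀ i j : Fin D, (j : ℕ) = (i : ℕ) + 1 → B i j ≠ 0 → B i i = B j j)
    (hDiag1 : ∀ i : Fin D, (i : ℕ) < s → B i i ≠ 0)
    (hDiag2 : ∀ i : Fin D, s ≤ (i : ℕ) → B i i = 0)
    {i j : Fin D} (h : B i j ≠ 0) : ((i : ℕ) < s ↔ (j : ℕ) < s) := by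
  rcases hJordan i j h with rfl | hji
  · exact Iff.rfl
  · constructor
    · intro hi
      by_contra hj
      have heq := hBlock i j hji h
      exact hDiag1 i hi (heq.trans (hDiag2 j (le_of_not_gt hj)))
    · intro hj; omega

lemma comm (B : Matrix (Fin D) (Fin D) ℂ)
    (hblk : ∀ {i j : Fin D}, B i j ≠ 0 → ((i : ℕ) < s ↔ (j : ℕ) < s))
    (P : Matrix (Fin D) (Fin D) ℂ)
    (hP : P = Matrix.of fun i j : Fin D => if i = j ∧ (i : ℕ) < s then 1 else 0) :
    P * B = B * P := by
  ext i j
  rw [Pmul_apply P hP]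
  have hBP : (B * P) i j = if (j : ℕ) < s then B i j else 0 := by
    subst hP
    rw [Matrix.mul_apply, Finset.sum_eq_single j]
    · by_cases hj : (j : ℕ) < s <;> simp [hj]
    · intro k _ hk
      simp [hk]
    · intro h; exact absurd (Finset.mem_univ j) h
  rw [hBP]
  by_cases hi : (i : ℕ) < s <;> by_cases hj : (j : ℕ) < s
  · simp [hi, hj]
  · have hz : B i j = 0 := by by_contra h; exact hj ((hblk h).mp hi)
    simp [hi, hj, hz]
  · have hz : B i j = 0 := by by_contra h; exact hi ((hblk h).mpr hj)
    simp [hi, hj, hz]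
  · simp [hi, hj]

lemma Binj (B : Matrix (Fin D) (Fin D) ℂ)
    (hJordan : ∀ i j : Fin D, B i j ≠ 0 → j = i ∨ (j : ℕ) = (i : ℕ) + 1)
    (hDiag1 : ∀ i : Fin D, (i : ℕ) < s → B i i ≠ 0)
    (M : Matrix (Fin D) (Fin D) ℂ) (hM : ∀ i j : Fin D, s ≤ (i : ℕ) → M i j = 0)
    (hBM : B * M = 0) : M = 0 := by
  have key : ∀ n (i j : Fin D), s ≤ (i : ℕ) + n → M i j = 0 := by
    intro n
    induction n with
    | zero => intro i j h; exact hM i j (by simpa using h)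
    | succ n ih =>
      intro i j h
      by_cases hi : s ≤ (i : ℕ)
      · exact hM i j hi
      push_neg at hi
      have h0 : (B * M) i j = 0 := by rw [hBM]; rfl
      rw [Matrix.mul_apply, Finset.sum_eq_single i] at h0
      · exact (mul_eq_zero.mp h0).resolve_left (hDiag1 i hi)
      · intro k _ hk
        by_cases hB : B i k = 0
        · rw [hB, zero_mul]
        · rcases hJordan i k hB with rfl | hk1
          · exact absurd rfl hk
          · rw [ih k j (by omega), mul_zero]
      · intro h'; exact absurd (Finset.mem_univ i) h'
  ext i j
  rw [Matrix.zero_apply]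
  exact key s i j (Nat.le_add_left s _)


noncomputable def Mt (P : Matrix (Fin D) (Fin D) ℂ)
    (L : Submodule ℂ (Matrix (Fin D) (Fin D) ℂ)) (n : ℕ) :
    Submodule ℂ (Matrix (Fin D) (Fin D) ℂ) :=
  (L ^ n).map (LinearMap.mulLeft ℂ P)

section Machinery

variable (B P : Matrix (Fin D) (Fin D) ℂ)
    (hP : P = Matrix.of fun i j : Fin D => if i = j ∧ (i : ℕ) < s then 1 else 0)
    (L : Submodule ℂ (Matrix (Fin D) (Fin D) ℂ))

include hP in
lemma fT (A : Matrix (Fin D) (Fin D) ℂ) : P * A ∈ T D s := by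
  intro i j hij
  rw [Pmul_apply P hP, if_neg (not_lt.2 hij)]

include hP in
lemma MtT (n : ℕ) : Mt P L n ≤ T D s := by
  rintro M ⟨A, hA, rfl⟩
  exact fT P hP A

include hP in
lemma Tfix {M : Matrix (Fin D) (Fin D) ℂ} (hM : M ∈ T D s) : P * M = M := by
  ext i j
  rw [Pmul_apply P hP]
  by_cases hi : (i : ℕ) < s
  · rw [if_pos hi]
  · rw [if_neg hi, hM i j (le_of_not_gt hi)]

include hP in
lemma Mtop (n : ℕ) (htop : L ^ n = ⊤) : Mt P L n = T D s := by
  refine le_antisymm (MtT P hP L n) (fun M hM => ?_)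
  exact ⟨M, by rw [htop]; trivial, Tfix P hP hM⟩

lemma Ltop (j : ℕ) (hj : L ^ (j + 1) = ⊤) (m : ℕ) (hm : j + 1 ≤ m) : L ^ m = ⊤ := by
  have htopL : (⊤ : Submodule ℂ (Matrix (Fin D) (Fin D) ℂ)) * L = ⊤ := by
    refine le_antisymm le_top ?_
    rw [pow_succ] at hj
    calc (⊤ : Submodule ℂ (Matrix (Fin D) (Fin D) ℂ)) = L ^ j * L := hj.symm
      _ ≤ ⊤ * L := mul_le_mul' le_top le_rfl
  obtain ⟨k, rfl⟩ := Nat.exists_eq_add_of_le hm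
  induction k with
  | zero => exact hj
  | succ k ih => rw [← add_assoc, pow_succ, ih (by omega), htopL]

variable (hcomm : P * B = B * P) (hBL : B ∈ L)

include hcomm hBL in
lemma Bmap (n : ℕ) :
    (Mt P L n).map (LinearMap.mulLeft ℂ B) ≤ Mt P L (n + 1) := by
  rintro M ⟨M', ⟨A, hA, rfl⟩, rfl⟩
  refine ⟨B * A, ?_, ?_⟩
  · rw [pow_succ']
    exact Submodule.mul_mem_mul hBL hA
  · simp only [LinearMap.mulLeft_apply]
    rw [← mul_assoc, hcomm, mul_assoc]

variable (hBinj : ∀ M ∈ T D s, B * M = 0 → M = 0)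

include hP hBinj in
lemma ginj (n : ℕ) :
    finrank ℂ ((Mt P L n).map (LinearMap.mulLeft ℂ B)) = finrank ℂ (Mt P L n) := by
  rw [← LinearMap.range_domRestrict]
  apply LinearMap.finrank_range_of_inj
  intro x y hxy
  apply Subtype.ext
  have hsub : (x : Matrix (Fin D) (Fin D) ℂ) - y ∈ T D s :=
    (T D s).sub_mem (MtT P hP L n x.2) (MtT P hP L n y.2)
  have hB0 : B * ((x : Matrix (Fin D) (Fin D) ℂ) - y) = 0 := by
    have hxy' : B * (x : Matrix (Fin D) (Fin D) ℂ) = B * y := by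
      simpa only [LinearMap.domRestrict_apply, LinearMap.mulLeft_apply] using hxy
    rw [mul_sub, hxy', sub_self]
  exact sub_eq_zero.mp (hBinj _ hsub hB0)

include hP hcomm hBL hBinj in
lemma dmono (n : ℕ) : finrank ℂ (Mt P L n) ≤ finrank ℂ (Mt P L (n + 1)) := by
  rw [← ginj B P hP L hBinj n]
  exact Submodule.finrank_mono (Bmap B P L hcomm hBL n)

include hP hcomm hBL hBinj in
lemma stall (n : ℕ) (h : finrank ℂ (Mt P L (n + 1)) = finrank ℂ (Mt P L n)) :
    Mt P L (n + 1) = (Mt P L n).map (LinearMap.mulLeft ℂ B) :=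
  (Submodule.eq_of_le_of_finrank_le (Bmap B P L hcomm hBL n)
    (by rw [ginj B P hP L hBinj n, h])).symm

include hcomm hBL in
lemma step (n : ℕ) (hn : Mt P L (n + 1) = (Mt P L n).map (LinearMap.mulLeft ℂ B)) :
    Mt P L (n + 2) = (Mt P L (n + 1)).map (LinearMap.mulLeft ℂ B) := by
  refine le_antisymm ?_ (Bmap B P L hcomm hBL (n + 1))
  rintro M ⟨C, hC, rfl⟩
  rw [pow_succ] at hC
  simp only [LinearMap.mulLeft_apply]
  refine Submodule.mul_induction_on hC (fun a ha x hx => ?_) (fun x y hx hy => ?_)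
  · have hfa : P * a ∈ (Mt P L n).map (LinearMap.mulLeft ℂ B) := hn ▸ ⟨a, ha, rfl⟩
    obtain ⟨m, ⟨a'', ha'', rfl⟩, hgm⟩ := hfa
    simp only [LinearMap.mulLeft_apply] at hgm
    refine ⟨P * (a'' * x), ⟨a'' * x, Submodule.mul_mem_mul ha'' hx, rfl⟩, ?_⟩
    simp only [LinearMap.mulLeft_apply]
    calc B * (P * (a'' * x)) = B * (P * a'') * x := by simp only [mul_assoc]
      _ = P * a * x := by rw [hgm]
      _ = P * (a * x) := mul_assoc _ _ _
  · rw [mul_add]; exact add_mem hx hy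

include hP hcomm hBL hBinj in
lemma dconst (n : ℕ) (h : finrank ℂ (Mt P L (n + 1)) = finrank ℂ (Mt P L n))
    (m : ℕ) (hm : n ≤ m) : finrank ℂ (Mt P L m) = finrank ℂ (Mt P L n) := by
  obtain ⟨k, rfl⟩ := Nat.exists_eq_add_of_le hm
  have key : ∀ k, Mt P L (n + k + 1) = (Mt P L (n + k)).map (LinearMap.mulLeft ℂ B) := by
    intro k
    induction k with
    | zero => exact stall B P hP L hcomm hBL hBinj n h
    | succ k ih => exact step B P L hcomm hBL (n + k) ih
  induction k with
  | zero => rfl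
  | succ k ih =>
    rw [← add_assoc, key k, ginj B P hP L hBinj (n + k)]
    exact ih (by omega)

end Machinery

end Stmt13Aux

open Stmt13Aux in
theorem stmt13 (D s : ℕ) (hs : s ≤ D)
    (B : Matrix (Fin D) (Fin D) ℂ)
    -- B is in Jordan normal form:
    (hJordan : ∀ i j : Fin D, B i j ≠ 0 → j = i ∨ (j : ℕ) = (i : ℕ) + 1)
    (hSuper : ∀ i j : Fin D, (j : ℕ) = (i : ℕ) + 1 → B i j = 0 ∨ B i j = 1)
    (hBlock : ∀ i j : Fin D, (j : ℕ) = (i : ℕ) + 1 → B i j ≠ 0 → B i i = B j j)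
    -- the first s eigenvalues are nonzero, the rest are zero:
    (hDiag1 : ∀ i : Fin D, (i : ℕ) < s → B i i ≠ 0)
    (hDiag2 : ∀ i : Fin D, s ≤ (i : ℕ) → B i i = 0)
    (P : Matrix (Fin D) (Fin D) ℂ)
    (hP : P = Matrix.of fun i j : Fin D => if i = j ∧ (i : ℕ) < s then 1 else 0)
    (L : Submodule ℂ (Matrix (Fin D) (Fin D) ℂ)) (hBL : B ∈ L)
    (hL : ∃ j ≥ 1, L ^ j = ⊤) :
    {M : Matrix (Fin D) (Fin D) ℂ | ∃ A ∈ L ^ (s * D), P * A = M} =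
      {M : Matrix (Fin D) (Fin D) ℂ | ∀ i j : Fin D, s ≤ (i : ℕ) → M i j = 0} := by
  obtain ⟨j, hj1, hjtop⟩ := hL
  obtain ⟨j', rfl⟩ : ∃ j'', j = j'' + 1 := ⟨j - 1, by omega⟩
  have hblk : ∀ {i j : Fin D}, B i j ≠ 0 → ((i : ℕ) < s ↔ (j : ℕ) < s) :=
    fun h => block B hJordan hBlock hDiag1 hDiag2 h
  have hcomm : P * B = B * P := comm B hblk P hP
  have hBinj : ∀ M ∈ T D s, B * M = 0 → M = 0 :=
    fun M hM => Binj B hJordan hDiag1 M hM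
  have hdj : ∀ m, j' + 1 ≤ m → Mt P L m = T D s :=
    fun m hm => Mtop P hP L m (Ltop L j' hjtop m hm)
  set t := finrank ℂ (T D s) with ht
  have hnostall : ∀ n, finrank ℂ (Mt P L n) < t →
      finrank ℂ (Mt P L n) < finrank ℂ (Mt P L (n + 1)) := by
    intro n hn
    rcases lt_or_eq_of_le (dmono B P hP L hcomm hBL hBinj n) with h | h
    · exact h
    · exfalso
      have h1 := dconst B P hP L hcomm hBL hBinj n h.symm (max (j' + 1) n)
        (le_max_right _ _)
      rw [hdj (max (j' + 1) n) (le_max_left _ _)] at h1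
      omega
  have hlow : ∀ n, min n t ≤ finrank ℂ (Mt P L n) := by
    intro n
    induction n with
    | zero => simp
    | succ n ih =>
      rcases le_or_gt t (finrank ℂ (Mt P L n)) with h | h
      · have := dmono B P hP L hcomm hBL hBinj n
        omega
      · have := hnostall n h
        omega
  have htle : t ≤ s * D := finrank_T_le D s hs
  have hge : t ≤ finrank ℂ (Mt P L (s * D)) := by
    have := hlow (s * D)
    omega
  have hfin : Mt P L (s * D) = T D s :=
    Submodule.eq_of_le_of_finrank_le (MtT P hP L (s * D)) hge
  ext M
  constructor
  · rintro ⟨A, hA, rfl⟩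
    exact fT P hP A
  · intro hM
    have : M ∈ Mt P L (s * D) := hfin.symm ▸ (hM : M ∈ T D s)
    obtain ⟨A, hA, hPA⟩ := this
    exact ⟨A, hA, hPA⟩
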